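/- For a linear map E between matrix spaces with decoherent action S (S_{ij} = ⟨i|E(|j⟩⟨j|)|i⟩), complete dephasing on both sides gives ‖D ∘ E ∘ D‖_{1→1} = ‖S‖_{1→1}, where the left side is the operator norm induced by the trace norm and the right side the operator norm of S between ℓ₁ sequence spaces. -/

import Mathlib

open scoped ComplexOrder

/-- The trace norm `‖A‖₁ = Tr √(Aᴴ A)`. -/
noncomputable def traceNorm {n : ℕ} (A : Matrix (Fin n) (Fin n) ℂ) : ℝ :=
  ((Matrix.posSemidef_conjTranspose_mul_self A).1.eigenvectorUnitary.1 *
    Matrix.diagonal (((↑) : ℝ → ℂ) ∘ (√·) ∘ (Matrix.posSemidef_conjTranspose_mul_self A).1.eigenvalues) *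
    (star (Matrix.posSemidef_conjTranspose_mul_self A).1.eigenvectorUnitary :
      Matrix (Fin n) (Fin n) ℂ)).trace.re

/-- The completely dephasing map, keeping only the diagonal. -/
def dephase {n : ℕ} (X : Matrix (Fin n) (Fin n) ℂ) : Matrix (Fin n) (Fin n) ℂ :=
  Matrix.diagonal fun i => X i i

open Matrix in
/-- The trace norm of a diagonal matrix is the `ℓ₁` norm of its diagonal. -/
lemma traceNorm_diagonal {n : ℕ} (a : Fin n → ℂ) :
    traceNorm (Matrix.diagonal a) = ∑ i, ‖a i‖ := by
  set hP := Matrix.posSemidef_conjTranspose_mul_self (Matrix.diagonal a) with hPdef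
  set hH : ((Matrix.diagonal a)ᴴ * Matrix.diagonal a).IsHermitian := hP.1
  set V : Matrix (Fin n) (Fin n) ℂ := (hH.eigenvectorUnitary : Matrix (Fin n) (Fin n) ℂ) with hV
  set lam := hH.eigenvalues
  have h1 : star V * V = 1 := Matrix.mem_unitaryGroup_iff'.mp hH.eigenvectorUnitary.2
  have htr : traceNorm (Matrix.diagonal a) = ∑ k, Real.sqrt (lam k) := by
    rw [traceNorm, Matrix.trace_mul_cycle, ← hV, h1, Matrix.one_mul,
      Matrix.trace_diagonal, Complex.re_sum]
    rfl
  have hM : (Matrix.diagonal a)ᴴ * Matrix.diagonal a = Matrix.diagonal (fun i => star (a i) * a i) := by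
    simp [Matrix.diagonal_conjTranspose, Matrix.diagonal_mul_diagonal]
  have hroots : Multiset.map (RCLike.ofReal ∘ lam) Finset.univ.val
      = Multiset.map (fun i => star (a i) * a i) Finset.univ.val := by
    rw [← hH.roots_charpoly_eq_eigenvalues, hM, Matrix.charpoly_diagonal, Polynomial.roots_prod _ _
      (Finset.prod_ne_zero_iff.mpr fun i _ => Polynomial.X_sub_C_ne_zero _)]
    simp only [Polynomial.roots_X_sub_C, Multiset.bind_singleton]
  have := congrArg (fun s => (Multiset.map (fun z : ℂ => Real.sqrt z.re) s).sum) hroots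
  simp only [Multiset.map_map] at this
  rw [htr]
  convert this using 1
  · rw [← Finset.sum_eq_multiset_sum]
    simp
  rw [← Finset.sum_eq_multiset_sum]
  refine Finset.sum_congr rfl fun i _ => ?_
  simp only [Function.comp_apply, Complex.star_def, ← Complex.normSq_eq_conj_mul_self,
    Complex.ofReal_re, Complex.normSq_eq_norm_sq, Real.sqrt_sq (norm_nonneg _)]

open Matrix in
/-- The `ℓ₁` norm of the diagonal is at most the trace norm. -/
lemma sum_abs_diag_le_traceNorm {n : ℕ} (x : Matrix (Fin n) (Fin n) ℂ) :
    ∑ j, ‖x j j‖ ≤ traceNorm x := by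
  set hP := Matrix.posSemidef_conjTranspose_mul_self x with hPdef
  set hH : (xᴴ * x).IsHermitian := hP.1
  set V : Matrix (Fin n) (Fin n) ℂ := (hH.eigenvectorUnitary : Matrix (Fin n) (Fin n) ℂ) with hV
  set lam := hH.eigenvalues
  have h1 : star V * V = 1 := Matrix.mem_unitaryGroup_iff'.mp hH.eigenvectorUnitary.2
  have h2 : V * star V = 1 := Matrix.mem_unitaryGroup_iff.mp hH.eigenvectorUnitary.2
  have hlam : ∀ k, 0 ≤ lam k := hP.eigenvalues_nonneg
  have htr : traceNorm x = ∑ k, Real.sqrt (lam k) := by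
    rw [traceNorm, Matrix.trace_mul_cycle, ← hV, h1, Matrix.one_mul,
      Matrix.trace_diagonal]
    simp [Complex.ofReal_re]
    rfl
  set u : Matrix (Fin n) (Fin n) ℂ := x * V with hu
  have key : ∀ (M : Matrix (Fin n) (Fin n) ℂ) (k : Fin n),
      ((star M * M) k k).re = ∑ j, ‖M j k‖ ^ 2 := by
    intro M k
    simp only [Matrix.mul_apply, Matrix.star_apply, Complex.re_sum]
    refine Finset.sum_congr rfl fun j _ => ?_
    rw [Complex.star_def, ← Complex.normSq_eq_conj_mul_self, Complex.ofReal_re,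
      Complex.normSq_eq_norm_sq]
  have hq : star u * u = Matrix.diagonal (Complex.ofReal ∘ lam) := by
    have hsp : star x * x = V * Matrix.diagonal (Complex.ofReal ∘ lam) * star V := by
      simpa [Matrix.star_eq_conjTranspose] using hH.spectral_theorem
    calc star u * u = star V * (star x * (x * V)) := by
          rw [hu, Matrix.star_mul]; simp only [Matrix.mul_assoc]
      _ = Matrix.diagonal (Complex.ofReal ∘ lam) := by
          rw [← Matrix.mul_assoc (star x), hsp]
          simp only [Matrix.mul_assoc]
          rw [h1, Matrix.mul_one, ← Matrix.mul_assoc, h1, Matrix.one_mul]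
  have hcolu : ∀ k, ∑ j, ‖u j k‖ ^ 2 = lam k := by
    intro k
    rw [← key u k, hq]
    simp
  have hcolV : ∀ k, ∑ j, ‖V j k‖ ^ 2 = 1 := by
    intro k
    rw [← key V k, h1]
    simp
  have hx : ∀ j, x j j = ∑ k, u j k * star (V j k) := by
    intro j
    have hxu : x = u * star V := by rw [hu, Matrix.mul_assoc, h2, Matrix.mul_one]
    conv_lhs => rw [hxu]
    simp [Matrix.mul_apply, Matrix.star_apply]
  calc ∑ j, ‖x j j‖
      ≤ ∑ j, ∑ k, ‖u j k‖ * ‖V j k‖ := by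
        refine Finset.sum_le_sum fun j _ => ?_
        rw [hx j]
        refine (norm_sum_le _ _).trans ?_
        refine Finset.sum_le_sum fun k _ => ?_
        rw [norm_mul]
        simp [Complex.star_def, Complex.norm_conj]
    _ = ∑ k, ∑ j, ‖u j k‖ * ‖V j k‖ := Finset.sum_comm
    _ ≤ ∑ k, Real.sqrt (lam k) := by
        refine Finset.sum_le_sum fun k _ => ?_
        rw [← Real.sqrt_sq (Finset.sum_nonneg fun j _ =>
          mul_nonneg (norm_nonneg _) (norm_nonneg _))]
        refine Real.sqrt_le_sqrt ?_
        calc (∑ j, ‖u j k‖ * ‖V j k‖) ^ 2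
            ≤ (∑ j, ‖u j k‖ ^ 2) * ∑ j, ‖V j k‖ ^ 2 :=
              Finset.sum_mul_sq_le_sq_mul_sq _ _ _
          _ = lam k := by rw [hcolu, hcolV, mul_one]
    _ = traceNorm x := htr.symm

lemma diagonal_eq_sum_std {k : ℕ} (d : Fin k → ℂ) :
    Matrix.diagonal d = ∑ j, d j • Matrix.single j j 1 := by
  ext i i'
  simp only [Matrix.sum_apply, Matrix.smul_apply, Matrix.single_apply,
    Matrix.diagonal_apply, smul_eq_mul]
  rcases eq_or_ne i i' with h | h
  · subst h
    rw [Finset.sum_eq_single i] <;> simp +contextual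
  · rw [Finset.sum_eq_zero]
    · simp [h]
    · intro j _
      rcases eq_or_ne j i with rfl | hj
      · simp [h]
      · simp [hj]

lemma dephase_E_dephase {n m : ℕ}
    (E : Matrix (Fin n) (Fin n) ℂ →ₗ[ℂ] Matrix (Fin m) (Fin m) ℂ)
    (x : Matrix (Fin n) (Fin n) ℂ) :
    dephase (E (dephase x)) = Matrix.diagonal
      (fun i => ∑ j, x j j * (E (Matrix.single j j 1)) i i) := by
  unfold dephase
  funext i
  rw [show Matrix.diagonal (fun i => x i i) = ∑ j, x j j • Matrix.single j j 1 from
    diagonal_eq_sum_std _]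
  rw [map_sum]
  simp only [_root_.map_smul, Matrix.sum_apply, Matrix.smul_apply, smul_eq_mul,
    Matrix.diagonal_apply_eq]

/-- For a linear map `E` between matrix spaces with decoherent action
`S_{ij} = ⟨i|E(|j⟩⟨j|)|i⟩`, complete dephasing of input and output gives
`‖D ∘ E ∘ D‖_{1→1} = ‖S‖_{1→1}`: the operator norm induced by the trace norm of the
dephased map equals the `ℓ₁ → ℓ₁` operator norm of the decoherent action. -/
theorem dephased_traceNorm_opNorm_eq_ell1_opNorm {n m : ℕ}
    (E : Matrix (Fin n) (Fin n) ℂ →ₗ[ℂ] Matrix (Fin m) (Fin m) ℂ)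
    (S : Matrix (Fin m) (Fin n) ℂ)
    (hS : ∀ i j, S i j = (E (Matrix.single j j 1)) i i) :
    sSup {r : ℝ | ∃ x : Matrix (Fin n) (Fin n) ℂ,
        traceNorm x ≤ 1 ∧ r = traceNorm (dephase (E (dephase x)))}
      = sSup {r : ℝ | ∃ a : Fin n → ℂ,
        (∑ j, ‖a j‖) ≤ 1 ∧ r = ∑ i, ‖∑ j, S i j * a j‖} := by
  congr 1
  ext r
  simp only [Set.mem_setOf_eq]
  constructor
  · rintro ⟨x, hx, rfl⟩
    refine ⟨fun j => x j j, (sum_abs_diag_le_traceNorm x).trans hx, ?_⟩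
    rw [dephase_E_dephase, traceNorm_diagonal]
    refine Finset.sum_congr rfl fun i _ => ?_
    congr 1
    exact Finset.sum_congr rfl fun j _ => by rw [hS, mul_comm]
  · rintro ⟨a, ha, rfl⟩
    refine ⟨Matrix.diagonal a, by rw [traceNorm_diagonal]; exact ha, ?_⟩
    have hda : dephase (Matrix.diagonal a) = Matrix.diagonal a := by
      unfold dephase
      simp [Matrix.diagonal_apply_eq]
    rw [dephase_E_dephase, traceNorm_diagonal]
    refine Finset.sum_congr rfl fun i _ => ?_
    congr 1
    refine Finset.sum_congr rfl fun j _ => ?_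
    rw [hS, Matrix.diagonal_apply_eq, mul_comm]
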